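/- For any set P of n points in R^d there exists a point c in R^d such that every closed halfspace containing c contains at least ⌈n/(d+1)⌉ points of P. -/

import Mathlib

open Finset

/-- Centerpoint theorem: there is a point `c` such that every closed halfspace
containing `c` contains at least `⌈n/(d+1)⌉` points of `P`. -/
theorem centerpoint_theorem (d : ℕ) (P : Finset (EuclideanSpace ℝ (Fin d))) :
    ∃ c : EuclideanSpace ℝ (Fin d),
      ∀ (a : EuclideanSpace ℝ (Fin d)) (b : ℝ), a ≠ 0 → b ≤ inner ℝ a c →
        ⌈(P.card : ℝ) / (d + 1)⌉ ≤ ((P.filter (fun p => b ≤ (inner ℝ a p : ℝ))).card : ℤ) := by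
  classical
  set n : ℕ := P.card with hn
  set k : ℤ := ⌈(n : ℝ) / (d + 1)⌉ with hk
  rcases eq_or_ne n 0 with hn0 | hn0
  · refine ⟨0, fun a b _ _ => ?_⟩
    have hk0 : k ≤ 0 := by simp [hk, hn0]
    calc k ≤ 0 := hk0
      _ ≤ _ := by positivity
  have hd1 : (0:ℝ) < (d:ℝ) + 1 := by positivity
  have hk1 : 1 ≤ k := by
    rw [hk, Int.le_ceil_iff]
    simp only [Int.cast_one, sub_self]
    exact div_pos (by exact_mod_cast Nat.pos_of_ne_zero hn0) hd1
  have hkey : ((d:ℤ) + 1) * (k - 1) < n := by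
    have h1 : (k : ℝ) - 1 < (n:ℝ)/(d+1) := by
      have := Int.ceil_lt_add_one ((n:ℝ)/(d+1))
      rw [hk]; push_cast; linarith
    have h2 : ((k:ℝ) - 1) * ((d:ℝ) + 1) < n := (lt_div_iff₀ hd1).mp h1
    have h3 : ((d:ℝ) + 1) * ((k:ℝ) - 1) < n := by linarith
    exact_mod_cast h3
  set s : Finset (Finset (EuclideanSpace ℝ (Fin d))) :=
    P.powerset.filter (fun S => (n:ℤ) < S.card + k) with hs
  -- any ≤ d+1 members of s have a common point of P
  have hne : ∀ I ⊆ s, I.card ≤ d + 1 → ∃ p ∈ P, ∀ S ∈ I, p ∈ S := by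
    intro I hIs hIcard
    set B : Finset (EuclideanSpace ℝ (Fin d)) := I.biUnion (fun S => P \ S) with hB
    have hBcard : (B.card : ℤ) < n := by
      have h1 : B.card ≤ ∑ S ∈ I, (P \ S).card := card_biUnion_le
      have h2 : ∀ S ∈ I, ((P \ S).card : ℤ) ≤ k - 1 := by
        intro S hS
        have hSs := hIs hS
        rw [hs, mem_filter, mem_powerset] at hSs
        obtain ⟨hSP, hSk⟩ := hSs
        have hc : (P \ S).card = n - S.card := by rw [card_sdiff_of_subset hSP, hn]
        have hle : S.card ≤ n := by rw [hn]; exact card_le_card hSP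
        have hc' : ((P \ S).card : ℤ) = (n:ℤ) - S.card := by
          rw [hc]; push_cast [hle]; ring
        omega
      have h3 : (∑ S ∈ I, ((P \ S).card : ℤ)) ≤ I.card * (k - 1) := by
        calc (∑ S ∈ I, ((P \ S).card : ℤ)) ≤ ∑ S ∈ I, (k - 1) :=
              Finset.sum_le_sum h2
          _ = I.card * (k - 1) := by rw [Finset.sum_const, nsmul_eq_mul]
      have h4 : (I.card : ℤ) * (k - 1) ≤ ((d:ℤ) + 1) * (k - 1) := by
        apply mul_le_mul_of_nonneg_right _ (by omega)
        exact_mod_cast hIcard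
      have h5 : ((B.card : ℤ)) ≤ ∑ S ∈ I, ((P \ S).card : ℤ) := by
        exact_mod_cast h1
      omega
    have hBlt : B.card < P.card := by exact_mod_cast hBcard
    have hnsub : ¬ P ⊆ B := fun h => absurd (card_le_card h) (not_le.2 hBlt)
    obtain ⟨p, hpP, hpB⟩ := Finset.not_subset.mp hnsub
    refine ⟨p, hpP, fun S hS => ?_⟩
    by_contra hpS
    exact hpB (mem_biUnion.2 ⟨S, hS, mem_sdiff.2 ⟨hpP, hpS⟩⟩)
  -- Helly's theorem
  have hHelly : (⋂ S ∈ s, convexHull ℝ (S : Set (EuclideanSpace ℝ (Fin d)))).Nonempty := by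
    apply Convex.helly_theorem' (𝕜 := ℝ) (fun S _ => convex_convexHull ℝ _)
    intro I hI hIcard
    rw [finrank_euclideanSpace_fin] at hIcard
    obtain ⟨p, hpP, hp⟩ := hne I hI hIcard
    exact ⟨p, Set.mem_iInter₂.2 fun S hS => subset_convexHull ℝ _ (hp S hS)⟩
  obtain ⟨c, hc⟩ := hHelly
  rw [Set.mem_iInter₂] at hc
  refine ⟨c, fun a b _ hab => ?_⟩
  by_contra hcon
  push_neg at hcon
  set S : Finset (EuclideanSpace ℝ (Fin d)) :=
    P.filter (fun p => ¬ b ≤ (inner ℝ a p : ℝ)) with hS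
  have hsplit : (P.filter (fun p => b ≤ (inner ℝ a p : ℝ))).card + S.card = n := by
    rw [hS, hn]; exact card_filter_add_card_filter_not _
  have hSmem : S ∈ s := by
    rw [hs, mem_filter, mem_powerset]
    refine ⟨filter_subset _ _, ?_⟩
    omega
  have hcS : c ∈ convexHull ℝ (S : Set (EuclideanSpace ℝ (Fin d))) := hc S hSmem
  have hlin : IsLinearMap ℝ (fun x : EuclideanSpace ℝ (Fin d) => (inner ℝ a x : ℝ)) :=
    ⟨fun x y => inner_add_right a x y, fun r x => real_inner_smul_right a x r⟩
  have hsub : (S : Set (EuclideanSpace ℝ (Fin d))) ⊆ {x | (inner ℝ a x : ℝ) < b} := by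
    intro x hx
    rw [Finset.mem_coe, hS, mem_filter] at hx
    exact lt_of_not_ge hx.2
  have := convexHull_min hsub (convex_halfSpace_lt hlin b) hcS
  exact absurd hab (not_le.2 this)
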